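/- arXiv:2504.00612 — 4 statements merged into one kernel-verified Lean document; each statement's English description precedes it below -/
import Mathlib

section
/- For any two conjunctive queries (finite directed edge-labelled multigraphs with distinguished output tuples) γ and δ, γ is semantically equivalent to δ (i.e., they have the same evaluation on every graph database) if and only if there exist homomorphisms γ → δ and δ → γ. -/
/-- A graph database over alphabet `A`: an edge-labelled directed graph. -/
structure DB (A : Type) where
  V : Type
  edge : V → A → V → Prop

/-- `G.path w u v`: there is a directed path from `u` to `v` labelled by the word `w`. -/
def DB.path {A : Type} (G : DB A) : List A → G.V → G.V → Prop
  | [], u, v => u = v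
  | a :: w, u, v => ∃ x, G.edge u a x ∧ DB.path G w x v

/-- A conjunctive query over alphabet `A` with `n` output variables. -/
structure CQ (A : Type) (n : ℕ) where
  V : Type
  finV : Finite V
  atoms : Set (V × A × V)
  finAtoms : atoms.Finite
  out : Fin n → V

/-- Evaluation: the tuple `t` satisfies `γ` on `G`. -/
def CQ.sat {A : Type} {n : ℕ} (γ : CQ A n) (G : DB A) (t : Fin n → G.V) : Prop :=
  ∃ h : γ.V → G.V, (∀ i, h (γ.out i) = t i) ∧ ∀ p ∈ γ.atoms, G.edge (h p.1) p.2.1 (h p.2.2)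

/-- A homomorphism of CQs: preserves atoms and output variables pointwise. -/
def CQHom {A : Type} {n : ℕ} (γ δ : CQ A n) (f : γ.V → δ.V) : Prop :=
  (∀ i, f (γ.out i) = δ.out i) ∧ ∀ p ∈ γ.atoms, (f p.1, p.2.1, f p.2.2) ∈ δ.atoms

/-- Canonical database of a CQ. -/
def canonDB {A : Type} {n : ℕ} (γ : CQ A n) : DB A where
  V := γ.V
  edge u a v := (u, a, v) ∈ γ.atoms

/-- Chandra–Merlin: two CQs are semantically equivalent iff there are homomorphisms
in both directions. -/
theorem cq_equiv_iff_homs_both_ways {A : Type} {n : ℕ} (γ δ : CQ A n) :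
    (∀ (G : DB A) (t : Fin n → G.V), γ.sat G t ↔ δ.sat G t) ↔
      ((∃ f, CQHom γ δ f) ∧ (∃ g, CQHom δ γ g)) := by
  constructor
  · intro h
    constructor
    · obtain ⟨f, hf1, hf2⟩ := (h (canonDB δ) δ.out).mpr ⟨id, fun i => rfl, fun p hp => hp⟩
      exact ⟨f, hf1, hf2⟩
    · obtain ⟨g, hg1, hg2⟩ := (h (canonDB γ) γ.out).mp ⟨id, fun i => rfl, fun p hp => hp⟩
      exact ⟨g, hg1, hg2⟩
  · rintro ⟨⟨f, hf1, hf2⟩, ⟨g, hg1, hg2⟩⟩ G t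
    constructor
    · rintro ⟨h, h1, h2⟩
      exact ⟨h ∘ g, fun i => by simp [hg1 i, h1 i],
        fun p hp => h2 _ (hg2 p hp)⟩
    · rintro ⟨h, h1, h2⟩
      exact ⟨h ∘ f, fun i => by simp [hf1 i, h1 i],
        fun p hp => h2 _ (hf2 p hp)⟩
end

section
/- The segments of a CRPQ γ, viewed as sets of atoms, form a partition of the set of atoms of γ. -/
/-- A finite directed multigraph with a distinguished set of output vertices. -/
structure MGraph where
  V : Type
  E : Type
  src : E → V
  tgt : E → V
  out : Set V

namespace MGraph

/-- An internal vertex: a non-output vertex of in-degree 1 and out-degree 1. -/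
def Internal (G : MGraph) (v : G.V) : Prop :=
  v ∉ G.out ∧ (∃! e, G.tgt e = v) ∧ (∃! e, G.src e = v)

def External (G : MGraph) (v : G.V) : Prop := ¬ G.Internal v

/-- A list of edges forms a directed walk. -/
def IsWalk (G : MGraph) : List G.E → Prop
  | [] => True
  | [_] => True
  | e₁ :: e₂ :: es => G.tgt e₁ = G.src e₂ ∧ G.IsWalk (e₂ :: es)

/-- The list of vertices visited by a walk. -/
def walkVerts (G : MGraph) : List G.E → List G.V
  | [] => []
  | e :: es => G.src e :: G.tgt e :: es.map G.tgt

/-- A one-way internal path: a nonempty simple directed path all of whose intermediate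
vertices are internal (the first and last vertex may coincide). -/
def IsInternalPath (G : MGraph) (es : List G.E) : Prop :=
  es ≠ [] ∧ G.IsWalk es ∧
  (∀ v ∈ (G.walkVerts es).tail.dropLast, G.Internal v) ∧
  (G.walkVerts es).tail.Nodup ∧ (G.walkVerts es).dropLast.Nodup

/-- A segment: a maximal one-way internal path. -/
def IsSegment (G : MGraph) (es : List G.E) : Prop :=
  G.IsInternalPath es ∧ (∀ e, ¬ G.IsInternalPath (e :: es)) ∧
  (∀ e, ¬ G.IsInternalPath (es ++ [e]))

def firstV (G : MGraph) (es : List G.E) : Option G.V := es.head?.map G.src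

def lastV (G : MGraph) (es : List G.E) : Option G.V := es.getLast?.map G.tgt

end MGraph

namespace MGraph

/-- The successor relation between edges: `f` follows `e` through an internal vertex. -/
def Rel (G : MGraph) (e f : G.E) : Prop := G.Internal (G.tgt e) ∧ G.src f = G.tgt e

variable {G : MGraph}

lemma Internal.tgt_unique {v : G.V} (h : G.Internal v) {e e' : G.E}
    (he : G.tgt e = v) (he' : G.tgt e' = v) : e = e' := by
  obtain ⟨g, -, hu⟩ := h.2.1
  rw [hu e he, hu e' he']

lemma Internal.src_unique {v : G.V} (h : G.Internal v) {e e' : G.E}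
    (he : G.src e = v) (he' : G.src e' = v) : e = e' := by
  obtain ⟨g, -, hu⟩ := h.2.2
  rw [hu e he, hu e' he']

lemma Rel.functional {e f f' : G.E} (h : G.Rel e f) (h' : G.Rel e f') : f = f' :=
  h.1.src_unique h.2 h'.2

lemma Rel.injective {e e' f : G.E} (h : G.Rel e f) (h' : G.Rel e' f) : e = e' :=
  h.1.tgt_unique rfl (h'.2.symm.trans h.2)

lemma walkVerts_eq : ∀ (es : List G.E) (h : es ≠ []),
    G.walkVerts es = G.src (es.head h) :: es.map G.tgt
  | _ :: _, _ => by simp [MGraph.walkVerts]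

lemma isWalk_iff : ∀ es : List G.E, G.IsWalk es ↔ es.Chain' (fun a b => G.tgt a = G.src b)
  | [] => by simp [MGraph.IsWalk, List.Chain']
  | [a] => by simp [MGraph.IsWalk, List.Chain']
  | a :: b :: t => by
    simp only [MGraph.IsWalk, List.Chain', List.isChain_cons_cons, isWalk_iff (b :: t)]

lemma chain'_rel_iff : ∀ es : List G.E, es.Chain' G.Rel ↔
    (es.Chain' (fun a b => G.tgt a = G.src b) ∧ ∀ v ∈ (es.map G.tgt).dropLast, G.Internal v)
  | [] => by simp [List.Chain']
  | [a] => by simp [List.Chain']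
  | a :: b :: t => by
    have ih := chain'_rel_iff (b :: t)
    simp only [List.Chain'] at ih ⊢
    rw [List.isChain_cons_cons, ih, List.isChain_cons_cons]
    simp only [List.map_cons, List.dropLast_cons₂, List.mem_cons, forall_eq_or_imp]
    constructor
    · rintro ⟨⟨h1, h2⟩, h3, h4⟩
      exact ⟨⟨h2.symm, h3⟩, h1, h4⟩
    · rintro ⟨⟨h1, h3⟩, h2, h4⟩
      exact ⟨⟨h2, h1.symm⟩, h3, h4⟩

lemma ip_iff (es : List G.E) (h : es ≠ []) : G.IsInternalPath es ↔
    es.Chain' G.Rel ∧ (es.map G.tgt).Nodup ∧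
      (G.src (es.head h) :: (es.map G.tgt).dropLast).Nodup := by
  have hm : es.map G.tgt ≠ [] := by simpa using h
  rw [MGraph.IsInternalPath, walkVerts_eq es h, isWalk_iff, chain'_rel_iff,
    List.tail_cons, List.dropLast_cons_of_ne_nil hm]
  simp only [h, ne_eq, not_false_iff, true_and]
  tauto

lemma ip_single (e : G.E) : G.IsInternalPath [e] := by
  rw [ip_iff [e] (by simp)]
  refine ⟨by simp [List.Chain'], by simp, by simp⟩

lemma ip_chain'_step {es : List G.E} (hch : es.Chain' G.Rel) {i : ℕ}
    (hi : i + 1 < es.length) : G.Rel es[i] es[i + 1] := by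
  have := List.isChain_iff_getElem.mp hch i (by omega)
  simpa [List.get_eq_getElem] using this

/-- Closure of a segment under appending a `Rel`-successor of its last edge. -/
lemma getLast_rel_closed {es : List G.E} (hseg : G.IsSegment es) (hne : es ≠ [])
    {f : G.E} (hrel : G.Rel (es.getLast hne) f) : f ∈ es := by
  by_contra hf
  obtain ⟨hip, -, hmax⟩ := hseg
  rw [ip_iff es hne] at hip
  obtain ⟨hch, hnd, hnd2⟩ := hip
  have hlen : 0 < es.length := List.length_pos_iff.mpr hne
  have hlast : es.getLast hne = es[es.length - 1] := List.getLast_eq_getElem hne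
  have hiii : G.tgt f ∉ es.map G.tgt := by
    intro hmem
    obtain ⟨x, hx, hxf⟩ := List.mem_map.mp hmem
    obtain ⟨i, hi, rfl⟩ := List.mem_iff_getElem.mp hx
    rcases Nat.lt_or_ge (i + 1) es.length with hi1 | hi1
    · have h1 := ip_chain'_step hch hi1
      have : f = es[i] := h1.1.tgt_unique hxf.symm rfl
      exact hf (this ▸ hx)
    · have hieq : i = es.length - 1 := by omega
      subst hieq
      have : f = es.getLast hne := hrel.1.tgt_unique (by rw [hlast]; exact hxf.symm) rfl
      exact hf (this ▸ List.getLast_mem hne)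
  have hii : G.src (es.head hne) ∉ es.map G.tgt := by
    intro hmem
    obtain ⟨x, hx, hxf⟩ := List.mem_map.mp hmem
    obtain ⟨i, hi, rfl⟩ := List.mem_iff_getElem.mp hx
    rcases Nat.lt_or_ge (i + 1) es.length with hi1 | hi1
    · have h1 := ip_chain'_step hch hi1
      have heq : es[i + 1] = es.head hne := h1.1.src_unique h1.2 hxf.symm
      rw [List.head_eq_getElem] at heq
      have := (hnd.of_map G.tgt).getElem_inj_iff.mp heq
      omega
    · have hieq : i = es.length - 1 := by omega
      subst hieq
      have : f = es.head hne := by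
        refine hrel.1.src_unique hrel.2 ?_
        rw [hlast]; exact hxf.symm
      exact hf (this ▸ List.head_mem hne)
  apply hmax f
  have hne' : es ++ [f] ≠ [] := by simp
  rw [ip_iff _ hne']
  refine ⟨?_, ?_, ?_⟩
  · simp only [List.Chain']; rw [List.isChain_append]
    refine ⟨hch, List.isChain_singleton f, ?_⟩
    intro x hx y hy
    rw [List.getLast?_eq_getLast_of_ne_nil hne] at hx
    simp only [Option.mem_some_iff, List.head?_cons] at hx hy
    subst hx; subst hy
    exact hrel
  · rw [List.map_append]
    simp only [List.map_cons, List.map_nil]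
    rw [List.nodup_append]
    exact ⟨hnd, List.nodup_singleton _, by simpa using fun h => hiii h⟩
  · rw [List.head_append_left hne, List.map_append]
    simp only [List.map_cons, List.map_nil, List.dropLast_concat]
    exact List.nodup_cons.mpr ⟨hii, hnd⟩

/-- Closure of a segment under prepending a `Rel`-predecessor of its first edge. -/
lemma head_rel_closed {es : List G.E} (hseg : G.IsSegment es) (hne : es ≠ [])
    {f : G.E} (hrel : G.Rel f (es.head hne)) : f ∈ es := by
  by_contra hf
  obtain ⟨hip, hmax, -⟩ := hseg
  rw [ip_iff es hne] at hip
  obtain ⟨hch, hnd, hnd2⟩ := hip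
  have hlen : 0 < es.length := List.length_pos_iff.mpr hne
  have hm : es.map G.tgt ≠ [] := by simpa using hne
  have hii : G.src (es.head hne) ∉ es.map G.tgt := by
    intro hmem
    obtain ⟨x, hx, hxf⟩ := List.mem_map.mp hmem
    obtain ⟨i, hi, rfl⟩ := List.mem_iff_getElem.mp hx
    rcases Nat.lt_or_ge (i + 1) es.length with hi1 | hi1
    · have h1 := ip_chain'_step hch hi1
      have heq : es[i + 1] = es.head hne := h1.1.src_unique h1.2 hxf.symm
      rw [List.head_eq_getElem] at heq
      have := (hnd.of_map G.tgt).getElem_inj_iff.mp heq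
      omega
    · have hieq : i = es.length - 1 := by omega
      subst hieq
      have hInt : G.Internal (G.tgt f) := hrel.1
      have : es[es.length - 1] = f := hInt.tgt_unique (hxf.trans hrel.2) rfl
      exact hf (this ▸ List.getElem_mem hi)
  have hfh : G.src f ≠ G.src (es.head hne) := by
    intro heq
    have hInt : G.Internal (G.src (es.head hne)) := by
      rw [hrel.2]; exact hrel.1
    exact hf ((hInt.src_unique heq rfl) ▸ List.head_mem hne)
  have hfd : G.src f ∉ (es.map G.tgt).dropLast := by
    intro hmem
    obtain ⟨i, hi, hieq⟩ := List.mem_iff_getElem.mp hmem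
    rw [List.getElem_dropLast] at hieq
    have hi' : i + 1 < es.length := by
      have := hi
      simp only [List.length_dropLast, List.length_map] at this
      omega
    rw [List.getElem_map] at hieq
    have h1 := ip_chain'_step hch hi'
    have : f = es[i + 1] := h1.1.src_unique hieq.symm h1.2
    exact hf (this ▸ List.getElem_mem hi')
  apply hmax f
  rw [ip_iff (f :: es) (by simp)]
  refine ⟨?_, ?_, ?_⟩
  · refine List.isChain_cons.mpr ⟨?_, hch⟩
    intro y hy
    rw [List.head?_eq_head hne] at hy
    simp only [Option.mem_some_iff] at hy
    subst hy
    exact hrel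
  · simp only [List.map_cons]
    refine List.nodup_cons.mpr ⟨?_, hnd⟩
    rw [← hrel.2]
    exact hii
  · simp only [List.head_cons, List.map_cons, List.dropLast_cons_of_ne_nil hm]
    rw [← hrel.2]
    exact List.nodup_cons.mpr ⟨by simp [hfh, hfd], hnd2⟩

lemma succ_closed {es : List G.E} (hseg : G.IsSegment es) {x f : G.E}
    (hx : x ∈ es) (hrel : G.Rel x f) : f ∈ es := by
  have hne : es ≠ [] := hseg.1.1
  have hip := hseg.1
  rw [ip_iff es hne] at hip
  obtain ⟨i, hi, rfl⟩ := List.mem_iff_getElem.mp hx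
  rcases Nat.lt_or_ge (i + 1) es.length with h1 | h1
  · have hstep := ip_chain'_step hip.1 h1
    exact (hrel.functional hstep) ▸ List.getElem_mem h1
  · have hieq : i = es.length - 1 := by omega
    subst hieq
    have : es[es.length - 1] = es.getLast hne := (List.getLast_eq_getElem hne).symm
    exact getLast_rel_closed hseg hne (this ▸ hrel)

lemma pred_closed {es : List G.E} (hseg : G.IsSegment es) {x f : G.E}
    (hx : x ∈ es) (hrel : G.Rel f x) : f ∈ es := by
  have hne : es ≠ [] := hseg.1.1
  have hip := hseg.1
  rw [ip_iff es hne] at hip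
  obtain ⟨i, hi, rfl⟩ := List.mem_iff_getElem.mp hx
  match i, hi with
  | 0, hi =>
    have : es[0] = es.head hne := (List.head_eq_getElem hne).symm
    exact head_rel_closed hseg hne (this ▸ hrel)
  | (j + 1), hi =>
    have hstep := ip_chain'_step hip.1 hi
    exact (hrel.injective hstep) ▸ List.getElem_mem (by omega)

lemma fwd_closed {es : List G.E} (hseg : G.IsSegment es) :
    ∀ (l : List G.E) (a : G.E), (a :: l).Chain' G.Rel → a ∈ es → ∀ x ∈ a :: l, x ∈ es := by
  intro l
  induction l with
  | nil =>
    intro a _ ha x hx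
    simp only [List.mem_singleton] at hx
    exact hx ▸ ha
  | cons b l' ih =>
    intro a hch ha x hx
    simp only [List.Chain'] at hch; rw [List.isChain_cons_cons] at hch
    have hb : b ∈ es := succ_closed hseg ha hch.1
    rcases List.mem_cons.mp hx with rfl | hx'
    · exact ha
    · exact ih b hch.2 hb x hx'

lemma bwd_closed {es : List G.E} (hseg : G.IsSegment es) :
    ∀ (l : List G.E) (a : G.E), (l ++ [a]).Chain' G.Rel → a ∈ es → ∀ x ∈ l, x ∈ es := by
  intro l
  induction l with
  | nil => intro a _ _ x hx; simp at hx
  | cons b l' ih =>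
    intro a hch ha x hx
    simp only [List.Chain'] at hch; rw [List.cons_append, List.isChain_cons] at hch
    have hhead : ∀ (h : l' ++ [a] ≠ []), (l' ++ [a]).head h ∈ es := by
      intro h
      cases l' with
      | nil => simpa using ha
      | cons c l'' =>
        have hc : c ∈ es := ih a (by simpa [List.Chain'] using hch.2) ha c (by simp)
        simpa using hc
    have hb : b ∈ es := by
      have h : l' ++ [a] ≠ [] := by simp
      have hr : G.Rel b ((l' ++ [a]).head h) := by
        apply hch.1
        rw [List.head?_eq_head h]
        simp
      exact pred_closed hseg (hhead h) hr
    rcases List.mem_cons.mp hx with rfl | hx'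
    · exact hb
    · exact ih a hch.2 ha x hx'

/-- Any internal path through an edge of a segment is contained in the segment. -/
lemma ip_subset_segment {es fs : List G.E} (hseg : G.IsSegment es)
    (hfs : G.IsInternalPath fs) {e : G.E} (he : e ∈ es) (hef : e ∈ fs) :
    ∀ x ∈ fs, x ∈ es := by
  have hne : fs ≠ [] := hfs.1
  rw [ip_iff fs hne] at hfs
  obtain ⟨cs, ds, rfl⟩ := List.append_of_mem hef
  have hch := hfs.1
  simp only [List.Chain'] at hch; rw [List.isChain_append] at hch
  obtain ⟨hcs, hed, hlink⟩ := hch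
  intro x hx
  rcases List.mem_append.mp hx with hx | hx
  · refine bwd_closed hseg cs e ?_ he x hx
    simp only [List.Chain']; rw [List.isChain_append]
    refine ⟨hcs, List.isChain_singleton e, ?_⟩
    intro a ha b hb
    simp only [List.head?_cons, Option.mem_some_iff] at hb
    subst hb
    exact hlink a ha e (by simp)
  · exact fwd_closed hseg ds e hed he x hx

lemma exists_segment [Finite G.E] (e : G.E) : ∃ es, G.IsSegment es ∧ e ∈ es := by
  haveI := Fintype.ofFinite G.E
  set N := Fintype.card G.E with hN
  have len_le : ∀ l : List G.E, G.IsInternalPath l → l.length ≤ N := by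
    intro l hl
    rcases eq_or_ne l [] with rfl | hne
    · simp
    · rw [ip_iff l hne] at hl
      have : l.Nodup := hl.2.1.of_map G.tgt
      simpa using this.length_le_card
  have aux : ∀ (k : ℕ) (l : List G.E), G.IsInternalPath l → N ≤ l.length + k →
      ∃ es, G.IsSegment es ∧ ∀ x ∈ l, x ∈ es := by
    intro k
    induction k with
    | zero =>
      intro l hl hlen
      refine ⟨l, ⟨hl, ?_, ?_⟩, fun x hx => hx⟩
      · intro f hf
        have := len_le _ hf
        simp only [List.length_cons] at this
        omega
      · intro f hf
        have := len_le _ hf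
        simp only [List.length_append, List.length_cons, List.length_nil] at this
        omega
    | succ k ih =>
      intro l hl hlen
      by_cases hseg : G.IsSegment l
      · exact ⟨l, hseg, fun x hx => hx⟩
      · by_cases h1 : ∃ f, G.IsInternalPath (f :: l)
        · obtain ⟨f, hf⟩ := h1
          obtain ⟨es, hes, hsub⟩ := ih (f :: l) hf (by simp; omega)
          exact ⟨es, hes, fun x hx => hsub x (by simp [hx])⟩
        · push_neg at h1
          have h2 : ∃ f, G.IsInternalPath (l ++ [f]) := by
            by_contra h2
            push_neg at h2
            exact hseg ⟨hl, h1, h2⟩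
          obtain ⟨f, hf⟩ := h2
          obtain ⟨es, hes, hsub⟩ := ih (l ++ [f]) hf (by simp; omega)
          exact ⟨es, hes, fun x hx => hsub x (by simp [hx])⟩
  obtain ⟨es, hes, hsub⟩ := aux N [e] (ip_single e) (by simp)
  exact ⟨es, hes, hsub e (by simp)⟩

end MGraph

/-- The number of segments of a multigraph, counting segments as sets of edges. -/
noncomputable def segCount (G : MGraph) : ℕ :=
  {S : Set G.E | ∃ es, G.IsSegment es ∧ S = {e | e ∈ es}}.ncard

/-- The segments of a finite multigraph, viewed as sets of edges, partition its edge set. -/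
theorem segments_partition_atoms (G : MGraph) [Finite G.V] [Finite G.E] :
    Setoid.IsPartition {S : Set G.E | ∃ es, G.IsSegment es ∧ S = {e | e ∈ es}} := by
  constructor
  · rintro ⟨es, hseg, hEq⟩
    have hne : es ≠ [] := hseg.1.1
    have : es.head hne ∈ ({e | e ∈ es} : Set G.E) := List.head_mem hne
    rw [← hEq] at this
    exact this
  · intro a
    obtain ⟨es, hseg, hmem⟩ := MGraph.exists_segment a
    refine ⟨{e | e ∈ es}, ⟨⟨es, hseg, rfl⟩, hmem⟩, ?_⟩
    rintro S ⟨⟨fs, hfs, rfl⟩, haS⟩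
    ext x
    constructor
    · intro hx
      exact MGraph.ip_subset_segment hseg hfs.1 hmem haS x hx
    · intro hx
      exact MGraph.ip_subset_segment hfs hseg.1 haS hmem x hx
end

section
/- Contraction of an internal variable preserves semantic equivalence of CRPQs: if γ' is obtained from CRPQ γ by replacing two distinct atoms x →L y and y →L' z (where y is an internal non-output variable with in-degree 1 and out-degree 1) by the single atom x →(L·L') z, then γ' is semantically equivalent to γ. -/
/-- A conjunctive regular path query: a finite directed multigraph whose edges (atoms)
are labelled by languages, with a tuple of output variables. -/
structure CRPQ (A : Type) (n : ℕ) where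
  V : Type
  I : Type
  finV : Finite V
  finI : Finite I
  src : I → V
  tgt : I → V
  lang : I → Set (List A)
  out : Fin n → V

/-- Satisfaction of a CRPQ on a database at an output tuple. -/
def CRPQ.sat {A : Type} {n : ℕ} (γ : CRPQ A n) (G : DB A) (t : Fin n → G.V) : Prop :=
  ∃ h : γ.V → G.V, (∀ k, h (γ.out k) = t k) ∧
    ∀ i, ∃ w ∈ γ.lang i, G.path w (h (γ.src i)) (h (γ.tgt i))

/-- A choice of expansion words: one word from each atom language. -/
def CRPQ.IsExpansionWords {A : Type} {n : ℕ} (γ : CRPQ A n) (w : γ.I → List A) : Prop :=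
  ∀ i, w i ∈ γ.lang i

/-- Satisfaction of the expansion of `γ` determined by the words `w`. -/
def CRPQ.expSat {A : Type} {n : ℕ} (γ : CRPQ A n) (w : γ.I → List A) (G : DB A)
    (t : Fin n → G.V) : Prop :=
  ∃ h : γ.V → G.V, (∀ k, h (γ.out k) = t k) ∧ ∀ i, G.path (w i) (h (γ.src i)) (h (γ.tgt i))

/-- A CQ is a CRPQ all of whose atom languages are single-letter singletons. -/
def CRPQ.IsCQ {A : Type} {n : ℕ} (η : CRPQ A n) : Prop := ∀ i, ∃ a : A, η.lang i = {[a]}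

/-- Concatenation of languages. -/
def Lconcat {A : Type} (L L' : Set (List A)) : Set (List A) :=
  {w | ∃ u ∈ L, ∃ v ∈ L', w = u ++ v}

open Classical in
/-- Contraction of the internal variable `γ.tgt i₁`: the consecutive atoms `i₁, i₂`
are replaced by a single atom labelled by the concatenated language, and the
internal variable is removed. -/
noncomputable def contractAt {A : Type} {n : ℕ} (γ : CRPQ A n) (i₁ i₂ : γ.I)
    (hne : i₁ ≠ i₂)
    (hout : ∀ k, γ.out k ≠ γ.tgt i₁)
    (hin : ∀ j, γ.tgt j = γ.tgt i₁ → j = i₁)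
    (hsrc : ∀ j, γ.src j = γ.tgt i₁ → j = i₂) : CRPQ A n where
  V := {v : γ.V // v ≠ γ.tgt i₁}
  I := {i : γ.I // i ≠ i₂}
  finV := by haveI := γ.finV; infer_instance
  finI := by haveI := γ.finI; infer_instance
  src i := ⟨γ.src i.1, fun h => i.2 (hsrc i.1 h)⟩
  tgt i :=
    if h : i.1 = i₁ then ⟨γ.tgt i₂, fun hc => hne (hin i₂ hc).symm⟩
    else ⟨γ.tgt i.1, fun hc => h (hin i.1 hc)⟩
  lang i := if i.1 = i₁ then Lconcat (γ.lang i₁) (γ.lang i₂) else γ.lang i.1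
  out k := ⟨γ.out k, hout k⟩

lemma DB.path_append {A : Type} (G : DB A) (u v : List A) (a c : G.V) :
    G.path (u ++ v) a c ↔ ∃ b, G.path u a b ∧ G.path v b c := by
  induction u generalizing a with
  | nil =>
    simp [DB.path]
  | cons x xs ih =>
    simp only [List.cons_append, DB.path]
    constructor
    · rintro ⟨m, hm, hp⟩
      obtain ⟨b, h1, h2⟩ := (ih m).mp hp
      exact ⟨b, ⟨m, hm, h1⟩, h2⟩
    · rintro ⟨b, ⟨m, hm, h1⟩, h2⟩
      exact ⟨m, hm, (ih m).mpr ⟨b, h1, h2⟩⟩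

/-- Contracting an internal variable (replacing the two atoms `x →L y`, `y →L' z`
through the internal variable `y` by a single atom `x →(L·L') z`) preserves semantic
equivalence. -/
theorem contraction_preserves_equivalence {A : Type} {n : ℕ} (γ : CRPQ A n)
    (i₁ i₂ : γ.I) (hne : i₁ ≠ i₂)
    (hpath : γ.tgt i₁ = γ.src i₂)
    (hout : ∀ k, γ.out k ≠ γ.tgt i₁)
    (hin : ∀ j, γ.tgt j = γ.tgt i₁ → j = i₁)
    (hsrc : ∀ j, γ.src j = γ.tgt i₁ → j = i₂) :
    ∀ (G : DB A) (t : Fin n → G.V),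
      γ.sat G t ↔ (contractAt γ i₁ i₂ hne hout hin hsrc).sat G t := by
  classical
  intro G t
  constructor
  · rintro ⟨h, hht, hatoms⟩
    refine ⟨fun v => h v.1, fun k => hht k, ?_⟩
    rintro ⟨i, hi⟩
    by_cases hii : i = i₁
    · obtain ⟨w₁, hw₁, hp₁⟩ := hatoms i₁
      obtain ⟨w₂, hw₂, hp₂⟩ := hatoms i₂
      refine ⟨w₁ ++ w₂, ?_, ?_⟩
      · simp only [contractAt, hii, if_true]
        exact ⟨w₁, hw₁, w₂, hw₂, rfl⟩
      · simp only [contractAt, hii, dif_pos]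
        rw [G.path_append]
        exact ⟨h (γ.tgt i₁), by simpa [hii] using hp₁, by rw [hpath]; exact hp₂⟩
    · obtain ⟨w, hw, hp⟩ := hatoms i
      refine ⟨w, ?_, ?_⟩
      · simp only [contractAt, hii, if_false]; exact hw
      · simp only [contractAt, hii, dif_neg]; exact hp
  · rintro ⟨h, hht, hatoms⟩
    obtain ⟨w, hw, hp⟩ := hatoms ⟨i₁, hne⟩
    simp only [contractAt, if_pos rfl, dif_pos] at hw hp
    obtain ⟨u, hu, v, hv, rfl⟩ := hw
    rw [G.path_append] at hp
    obtain ⟨m, hpu, hpv⟩ := hp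
    refine ⟨fun x => if hx : x = γ.tgt i₁ then m else h ⟨x, hx⟩, ?_, ?_⟩
    · intro k; simpa [contractAt, hout k] using hht k
    · intro i
      by_cases h1 : i = i₁
      · subst h1
        have hs : γ.src i ≠ γ.tgt i := fun hc => hne (hsrc i hc)
        refine ⟨u, hu, ?_⟩
        simpa [hs] using hpu
      by_cases h2 : i = i₂
      · subst h2
        have ht2 : γ.tgt i ≠ γ.tgt i₁ := fun hc => hne (hin i hc).symm
        refine ⟨v, hv, ?_⟩
        simpa [← hpath, ht2] using hpv
      · have hs : γ.src i ≠ γ.tgt i₁ := fun hc => h2 (hsrc i hc)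
        have ht2 : γ.tgt i ≠ γ.tgt i₁ := fun hc => h1 (hin i hc)
        obtain ⟨w, hw, hp⟩ := hatoms ⟨i, h2⟩
        simp only [contractAt, h1, if_false, dif_neg] at hw hp
        exact ⟨w, hw, by simpa [hs, ht2] using hp⟩
end

section
/- Let γ be the Boolean CRPQ () = x →K y, and δ the Boolean CRPQ () = x →K y ∧ ⋀_{j=1}^p x →(A* Lⱼ A*) y, over alphabet A, where K and all Lⱼ are nonempty regular languages not containing the empty word. If K ⊆ A*(⋂ⱼ Lⱼ)A*, then δ is equivalent to γ, i.e., δ is equivalent to a CRPQ with a single atom. -/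
/-- A language is regular if it is accepted by some NFA with finitely many states. -/
def IsRegularLang {A : Type} (L : Set (List A)) : Prop :=
  ∃ (σ : Type) (_ : Fintype σ) (M : NFA A σ), ∀ w, w ∈ M.accepts ↔ w ∈ L

/-- The language `A* L A*`. -/
def AstarLAstar {A : Type} (L : Set (List A)) : Set (List A) :=
  {w | ∃ u x v, x ∈ L ∧ w = u ++ x ++ v}

/-- The Boolean CRPQ `() = x →K y` with a single atom and two distinct variables. -/
def singleAtomQ (A : Type) (K : Set (List A)) : CRPQ A 0 where
  V := Fin 2
  I := Fin 1
  finV := inferInstance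
  finI := inferInstance
  src _ := 0
  tgt _ := 1
  lang _ := K
  out k := k.elim0

/-- The Boolean CRPQ `() = ⋀ⱼ x →(L j) y` with two variables. -/
def multiAtomQ (A : Type) (p : ℕ) (L : Fin p → Set (List A)) : CRPQ A 0 where
  V := Fin 2
  I := Fin p
  finV := inferInstance
  finI := inferInstance
  src _ := 0
  tgt _ := 1
  lang j := L j
  out k := k.elim0

/-- The Boolean CRPQ `δ() = x →K y ∧ ⋀ⱼ x →(A* Lⱼ A*) y`. -/
def deltaQ (A : Type) (K : Set (List A)) (p : ℕ) (L : Fin p → Set (List A)) : CRPQ A 0 where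
  V := Fin 2
  I := Option (Fin p)
  finV := inferInstance
  finI := inferInstance
  src _ := 0
  tgt _ := 1
  lang i := match i with
    | none => K
    | some j => AstarLAstar (L j)
  out k := k.elim0

/-- If `K ⊆ A*(⋂ⱼ Lⱼ)A*` then `δ() = x →K y ∧ ⋀ⱼ x →(A* Lⱼ A*) y` is equivalent to the
single-atom CRPQ `γ() = x →K y`. -/
theorem delta_equiv_single_atom {A : Type} (p : ℕ)
    (K : Set (List A)) (L : Fin p → Set (List A))
    (hKreg : IsRegularLang K) (hLreg : ∀ j, IsRegularLang (L j))
    (hKne : K.Nonempty) (hKeps : [] ∉ K)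
    (hLne : ∀ j, (L j).Nonempty) (hLeps : ∀ j, [] ∉ L j)
    (hsub : K ⊆ {w | ∃ u x v, (∀ j, x ∈ L j) ∧ w = u ++ x ++ v}) :
    ∀ (G : DB A) (t : Fin 0 → G.V),
      (deltaQ A K p L).sat G t ↔ (singleAtomQ A K).sat G t := by
  intro G t
  constructor
  · rintro ⟨h, -, hi⟩
    exact ⟨h, fun k => k.elim0, fun i => hi none⟩
  · rintro ⟨h, -, hi⟩
    obtain ⟨w, hwK, hp⟩ := hi ((0 : Fin 1) : (singleAtomQ A K).I)
    refine ⟨h, fun k => k.elim0, fun i => ?_⟩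
    match i with
    | none => exact ⟨w, hwK, hp⟩
    | some j =>
      obtain ⟨u, x, v, hx, rfl⟩ := hsub hwK
      exact ⟨u ++ x ++ v, ⟨u, x, v, hx j, rfl⟩, hp⟩
end
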